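/- Let F, G : A → B be functors, P : ⟨F|G⟩ → A the forgetful functor of the inserter category. Let f : (A,a) → (C,c) and g : (B,b) → (C,c) be morphisms in ⟨F|G⟩ and h : A → B a morphism in A with P f = P g ∘ h. If G(P g) is a monomorphism, then there exists a unique morphism h' : (A,a) → (B,b) in ⟨F|G⟩ with P h' = h and f = g ∘ h'. -/
import Mathlib


open CategoryTheory

universe v₁ v₂ v₃ u₁ u₂ u₃

variable {A : Type u₁} {B : Type u₂} [Category.{v₁} A] [Category.{v₂} B]

/-- The inserter category `⟨F|G⟩` of two functors `F G : A ⥤ B`: objects are pairs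
`(A, α : F A ⟶ G A)`. -/
structure Inserter (F G : A ⥤ B) where
  obj : A
  hom : F.obj obj ⟶ G.obj obj

namespace Inserter

variable {F G : A ⥤ B}

instance : Category (Inserter F G) where
  Hom X Y := { u : X.obj ⟶ Y.obj // X.hom ≫ G.map u = F.map u ≫ Y.hom }
  id X := ⟨𝟙 X.obj, by simp⟩
  comp {X Y Z} u v := ⟨u.1 ≫ v.1, by
    rw [F.map_comp, G.map_comp, ← Category.assoc, u.2, Category.assoc, v.2, ← Category.assoc]⟩
  id_comp u := Subtype.ext (Category.id_comp u.1)
  comp_id u := Subtype.ext (Category.comp_id u.1)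
  assoc u v w := Subtype.ext (Category.assoc u.1 v.1 w.1)

/-- The forgetful functor `P : ⟨F|G⟩ ⥤ A`. -/
def P (F G : A ⥤ B) : Inserter F G ⥤ A where
  obj X := X.obj
  map u := u.1
  map_id _ := rfl
  map_comp _ _ := rfl

end Inserter

/-- Given morphisms `f : (A,a) ⟶ (C,c)` and `g : (B,b) ⟶ (C,c)` in the inserter category and
a morphism `h : A ⟶ B` in `A` with `P f = P g ∘ h`, if `G (P g)` is a monomorphism then there
is a unique morphism `h' : (A,a) ⟶ (B,b)` with `P h' = h` and `f = g ≫ h'`. -/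
theorem inserter_lift_of_mono {F G : A ⥤ B} {X Y Z : Inserter F G}
    (f : X ⟶ Z) (g : Y ⟶ Z) (h : X.obj ⟶ Y.obj)
    (hfg : f.1 = h ≫ g.1) (hmono : Mono (G.map g.1)) :
    ∃! h' : X ⟶ Y, h'.1 = h ∧ f = h' ≫ g := by

  have key : X.hom ≫ G.map h = F.map h ≫ Y.hom := by
    rw [← cancel_mono (G.map g.1), Category.assoc, ← G.map_comp, ← hfg, f.2, hfg, F.map_comp,
      Category.assoc, Category.assoc, g.2]
  refine ⟨⟨h, key⟩, ⟨rfl, Subtype.ext hfg⟩, ?_⟩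
  rintro ⟨h', hc⟩ ⟨rfl, -⟩
  rfl
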